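/- (Fact: encoders next to a selector) In every tiling of the plane by the constructed set B(T) of 29 Wang bars, the unit cell directly above the top pointer of each placed selector is the locator cell of a section of a placed encoder, and the unit cell directly below the bottom pointer of each placed selector is the locator cell of a section of a placed encoder; thus each selector picks out one section of the encoder above it and one section of the encoder below it. -/

import Mathlib

/-- A Wang tile: a quadruple (north, east, south, west) of colors (natural numbers). -/
abbrev WangTile : Type := ℕ × ℕ × ℕ × ℕ

def WangTile.north (t : WangTile) : ℕ := t.1
def WangTile.east  (t : WangTile) : ℕ := t.2.1
def WangTile.south (t : WangTile) : ℕ := t.2.2.1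
def WangTile.west  (t : WangTile) : ℕ := t.2.2.2

/-- `f : ℤ × ℤ → WangTile` is a tiling of the plane by (translated copies of) tiles
of `T`: adjacent edges carry the same color. -/
def IsWangTiling (T : Finset WangTile) (f : ℤ × ℤ → WangTile) : Prop :=
  (∀ p, f p ∈ T) ∧
  (∀ x y : ℤ, (f (x, y)).east = (f (x + 1, y)).west) ∧
  (∀ x y : ℤ, (f (x, y)).north = (f (x, y + 1)).south)

/-- The finite set `T` of Wang tiles tiles the plane. -/
def TilesPlane (T : Finset WangTile) : Prop := ∃ f, IsWangTiling T f

/-- A Wang bar: a list of top colors, a list of bottom colors (of the same positive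
length `l`), a left color and a right color. -/
abbrev WangBar : Type := List ℕ × List ℕ × ℕ × ℕ

def WangBar.top    (b : WangBar) : List ℕ := b.1
def WangBar.bottom (b : WangBar) : List ℕ := b.2.1
def WangBar.left   (b : WangBar) : ℕ := b.2.2.1
def WangBar.right  (b : WangBar) : ℕ := b.2.2.2

/-- The length of a Wang bar. -/
def WangBar.len (b : WangBar) : ℕ := b.1.length

/-- A genuine Wang bar has positive length and as many bottom colors as top colors. -/
def WangBar.IsValid (b : WangBar) : Prop := 0 < b.len ∧ b.top.length = b.bottom.length

/-- A tiling of the plane by translated copies of bars of `B`, recorded by the function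
`f` sending each unit cell to the bar covering it together with the index of the cell
inside that bar.  The conditions say that the cells of one placed bar are consecutive
cells of one row, that colors of horizontally adjacent bars match at their common
vertical unit segment, and that colors of vertically adjacent bars match at every
common horizontal unit segment. -/
def IsBarTiling (B : Finset WangBar) (f : ℤ × ℤ → WangBar × ℕ) : Prop :=
  (∀ p, (f p).1 ∈ B) ∧
  (∀ p, (f p).2 < (f p).1.len) ∧
  (∀ x y : ℤ, (f (x, y)).2 + 1 < (f (x, y)).1.len →
      f (x + 1, y) = ((f (x, y)).1, (f (x, y)).2 + 1)) ∧
  (∀ x y : ℤ, 0 < (f (x, y)).2 →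
      f (x - 1, y) = ((f (x, y)).1, (f (x, y)).2 - 1)) ∧
  (∀ x y : ℤ, (f (x, y)).2 + 1 = (f (x, y)).1.len →
      (f (x + 1, y)).2 = 0 ∧ (f (x, y)).1.right = (f (x + 1, y)).1.left) ∧
  (∀ x y : ℤ, (f (x, y)).1.top.getD (f (x, y)).2 0 =
      (f (x, y + 1)).1.bottom.getD (f (x, y + 1)).2 0)

/-- The finite set `B` of Wang bars tiles the plane. -/
def BarsTilePlane (B : Finset WangBar) : Prop := ∃ f, IsBarTiling B f

/-- The set of the (at most four) edge colors of a Wang tile. -/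
def WangTile.colors (t : WangTile) : Finset ℕ := {t.north, t.east, t.south, t.west}

/-- The set of distinct colors occurring on the edges of tiles of `T`. -/
def tileSetColors (T : Finset WangTile) : Finset ℕ := T.biUnion WangTile.colors

/-! ### The paper's construction of the set `B(T)` of 29 Wang bars
The construction uses the 20 new colors `a_1, …, a_8, b_1, …, b_8, x, y, z, 0`
together with six internal colors gluing the seven bars of the selector and the
internal colors `b_5, b_6, b_7, b_8` are among the `b`-colors. -/

def aCol (i : ℕ) : ℕ := i          -- the colors `a_1, …, a_8`
def bCol (i : ℕ) : ℕ := 8 + i      -- the colors `b_1, …, b_8`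
def xCol : ℕ := 17                 -- the color `x`
def yCol : ℕ := 18                 -- the color `y`
def zCol : ℕ := 19                 -- the color `z`
def oCol : ℕ := 0                  -- the color `0`
def sCol (i : ℕ) : ℕ := 19 + i     -- the six internal colors of the selector

/-- `n`: the number of tiles of `T`. -/
def nOf (T : Finset WangTile) : ℕ := T.card

/-- `m`: the number of distinct edge colors of `T`. -/
def mOf (T : Finset WangTile) : ℕ := (tileSetColors T).card

/-- The list of the `m` edge colors of `T`, in increasing order. -/
def colorList (T : Finset WangTile) : List ℕ := (tileSetColors T).sort (· ≤ ·)

/-- The unary index (position among the `m` colors of `T`) of an edge color. -/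
def colorIdx (T : Finset WangTile) (c : ℕ) : ℕ := (colorList T).idxOf c

/-- Top side of an arm of an encoder section: all `m` cells carry `a_5` except the
single cell at position `pos`, which carries `a_3`. -/
def armTop (m pos : ℕ) : List ℕ :=
  (List.range m).map fun i => if i = pos then aCol 3 else aCol 5

/-- Bottom side of an arm: all cells carry `a_6` except the cell at `pos` carrying `a_4`. -/
def armBot (m pos : ℕ) : List ℕ :=
  (List.range m).map fun i => if i = pos then aCol 4 else aCol 6

/-- Top side of the encoder section simulating the tile `t` (tilted by `π/4`):
left arm encoding the north color, the locator cell carrying `a_1`, and right arm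
encoding the east color. -/
def sectionTop (T : Finset WangTile) (t : WangTile) : List ℕ :=
  armTop (mOf T) (colorIdx T t.north) ++ [aCol 1] ++ armTop (mOf T) (colorIdx T t.east)

/-- Bottom side of the section simulating `t`: left arm encoding the west color,
the locator cell carrying `a_2`, and right arm encoding the south color. -/
def sectionBot (T : Finset WangTile) (t : WangTile) : List ℕ :=
  armBot (mOf T) (colorIdx T t.west) ++ [aCol 2] ++ armBot (mOf T) (colorIdx T t.south)

/-- (i) The encoder: one bar of length `n(2m+1)`, with one section of length `2m+1`
per tile of `T`, and left and right sides colored `z`. -/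
noncomputable def encoderBar (T : Finset WangTile) : WangBar :=
  ((T.toList.map (sectionTop T)).flatten, (T.toList.map (sectionBot T)).flatten, zCol, zCol)

/-- (ii) The seven bars of the selector, glued by six distinct internal colors. -/
def topPointer : WangBar := ([aCol 2], [sCol 1], oCol, oCol)
def selUpper2  : WangBar := ([sCol 1], [sCol 2], oCol, oCol)
def selUpper1  : WangBar := ([sCol 2], [sCol 3], xCol, yCol)
def selectorLong (T : Finset WangTile) : WangBar :=
  (List.replicate (mOf T) (aCol 7) ++ [sCol 3] ++ List.replicate (mOf T) (aCol 7),
   List.replicate (mOf T) (aCol 8) ++ [sCol 4] ++ List.replicate (mOf T) (aCol 8),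
   zCol, zCol)
def selLower1  : WangBar := ([sCol 4], [sCol 5], xCol, yCol)
def selLower2  : WangBar := ([sCol 5], [sCol 6], oCol, oCol)
def bottomPointer : WangBar := ([sCol 6], [aCol 1], oCol, oCol)

/-- The selector group. -/
def selectorBars (T : Finset WangTile) : Finset WangBar :=
  {topPointer, selUpper2, selUpper1, selectorLong T, selLower1, selLower2, bottomPointer}

/-- (iii) The aligner. -/
def alignerBar (T : Finset WangTile) : WangBar :=
  (List.replicate (2 * mOf T + 1) (aCol 5), List.replicate (2 * mOf T + 1) (aCol 6),
   zCol, zCol)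

/-- The length `(n-1)(2m+1) + m + 1` of the two long linker bars. -/
def linkLen (T : Finset WangTile) : ℕ := (nOf T - 1) * (2 * mOf T + 1) + mOf T + 1

/-- (iv) The linkers. -/
def linkA4B1 : WangBar := ([aCol 4], [bCol 1], oCol, oCol)
def linkB2A3 : WangBar := ([bCol 2], [aCol 3], oCol, oCol)
def longLinkA (T : Finset WangTile) : WangBar :=
  (bCol 1 :: List.replicate (linkLen T - 1) (bCol 3),
   List.replicate (linkLen T - 1) (bCol 4) ++ [bCol 2], yCol, xCol)
def longLinkB (T : Finset WangTile) : WangBar :=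
  (List.replicate (linkLen T - 1) (bCol 3) ++ [bCol 1],
   bCol 2 :: List.replicate (linkLen T - 1) (bCol 4), yCol, xCol)

def linkerBars (T : Finset WangTile) : Finset WangBar :=
  {linkA4B1, linkB2A3, longLinkA T, longLinkB T}

/-- (v) Group-1 fillers. -/
def group1Fillers : Finset WangBar :=
  { ([aCol 2], [bCol 3], oCol, oCol), ([aCol 4], [bCol 3], oCol, oCol),
    ([aCol 6], [bCol 3], oCol, oCol), ([aCol 8], [bCol 3], oCol, oCol),
    ([bCol 4], [aCol 1], oCol, oCol), ([bCol 4], [aCol 3], oCol, oCol),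
    ([bCol 4], [aCol 5], oCol, oCol), ([bCol 4], [aCol 7], oCol, oCol) }

/-- (vi) Group-2 fillers. -/
def group2Fillers : Finset WangBar :=
  { ([aCol 8], [bCol 5], oCol, oCol), ([bCol 5], [bCol 6], xCol, xCol),
    ([bCol 5], [bCol 6], yCol, yCol), ([bCol 6], [aCol 5], oCol, oCol),
    ([aCol 6], [bCol 7], oCol, oCol), ([bCol 7], [bCol 8], xCol, xCol),
    ([bCol 7], [bCol 8], yCol, yCol), ([bCol 8], [aCol 7], oCol, oCol) }

/-- The constructed set `B(T)` of 29 Wang bars. -/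
noncomputable def barsOf (T : Finset WangTile) : Finset WangBar :=
  {encoderBar T} ∪ selectorBars T ∪ {alignerBar T} ∪ linkerBars T ∪
    group1Fillers ∪ group2Fillers

section Aux
variable {α : Type*}

lemma getD_ne_of_not_mem {l : List ℕ} {c : ℕ} (hc : c ≠ 0) (h : c ∉ l) (i : ℕ) :
    l.getD i 0 ≠ c := by
  intro hi
  rcases lt_or_ge i l.length with h' | h'
  · rw [List.getD_eq_getElem _ _ h'] at hi
    exact h (hi ▸ List.getElem_mem h')
  · rw [List.getD_eq_default _ _ h'] at hi
    exact hc hi.symm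

lemma flatten_locator {s m c : ℕ} (hm : m < s) (hc : c ≠ 0)
    (ls : List (List ℕ)) (hlen : ∀ l ∈ ls, l.length = s)
    (hloc : ∀ l ∈ ls, ∀ j, l.getD j 0 = c → j = m) :
    ∀ i, ls.flatten.getD i 0 = c → i % s = m := by
  induction ls with
  | nil => intro i hi; simp at hi; exact absurd hi.symm hc
  | cons l ls ih =>
    intro i hi
    have hl : l.length = s := hlen l (by simp)
    rw [List.flatten_cons] at hi
    rcases lt_or_ge i s with h' | h'
    · rw [List.getD_append _ _ _ _ (by omega)] at hi
      have := hloc l (by simp) i hi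
      rw [this]; exact Nat.mod_eq_of_lt hm
    · rw [List.getD_append_right _ _ _ _ (by omega)] at hi
      have := ih (fun l hl => hlen l (by simp [hl]))
        (fun l hl => hloc l (by simp [hl])) (i - l.length) hi
      rw [Nat.mod_eq_sub_mod (by omega)]
      rw [hl] at this
      exact this
end Aux

lemma armBot_getD_ne (m p j : ℕ) : (armBot m p).getD j 0 ≠ 2 := by
  intro h
  rcases lt_or_ge j m with hj | hj
  · rw [List.getD_eq_getElem _ _ (by simp [armBot]; omega)] at h
    simp only [armBot, List.getElem_map, List.getElem_range] at h
    split at h <;> simp [aCol] at h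
  · rw [List.getD_eq_default _ _ (by simp [armBot]; omega)] at h
    omega

lemma armTop_getD_ne (m p j : ℕ) : (armTop m p).getD j 0 ≠ 1 := by
  intro h
  rcases lt_or_ge j m with hj | hj
  · rw [List.getD_eq_getElem _ _ (by simp [armTop]; omega)] at h
    simp only [armTop, List.getElem_map, List.getElem_range] at h
    split at h <;> simp [aCol] at h
  · rw [List.getD_eq_default _ _ (by simp [armTop]; omega)] at h
    omega

lemma armBot_length (m p : ℕ) : (armBot m p).length = m := by simp [armBot]
lemma armTop_length (m p : ℕ) : (armTop m p).length = m := by simp [armTop]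

lemma sectionBot_length (T : Finset WangTile) (t : WangTile) :
    (sectionBot T t).length = 2 * mOf T + 1 := by
  simp [sectionBot, armBot_length]; omega

lemma sectionTop_length (T : Finset WangTile) (t : WangTile) :
    (sectionTop T t).length = 2 * mOf T + 1 := by
  simp [sectionTop, armTop_length]; omega

lemma sectionBot_loc (T : Finset WangTile) (t : WangTile) (j : ℕ)
    (h : (sectionBot T t).getD j 0 = 2) : j = mOf T := by
  set m := mOf T with hm
  by_contra hne
  unfold sectionBot at h
  rcases lt_trichotomy j m with hj | hj | hj
  · rw [List.getD_append _ _ _ _ (by simp [armBot_length]; omega),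
      List.getD_append _ _ _ _ (by rw [armBot_length]; omega)] at h
    exact armBot_getD_ne _ _ _ h
  · exact hne hj
  · rw [List.getD_append_right _ _ _ _ (by simp [armBot_length]; omega)] at h
    simp only [List.length_append, armBot_length, List.length_singleton] at h
    exact armBot_getD_ne _ _ _ h

lemma sectionTop_loc (T : Finset WangTile) (t : WangTile) (j : ℕ)
    (h : (sectionTop T t).getD j 0 = 1) : j = mOf T := by
  set m := mOf T with hm
  by_contra hne
  unfold sectionTop at h
  rcases lt_trichotomy j m with hj | hj | hj
  · rw [List.getD_append _ _ _ _ (by simp [armTop_length]; omega),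
      List.getD_append _ _ _ _ (by rw [armTop_length]; omega)] at h
    exact armTop_getD_ne _ _ _ h
  · exact hne hj
  · rw [List.getD_append_right _ _ _ _ (by simp [armTop_length]; omega)] at h
    simp only [List.length_append, armTop_length, List.length_singleton] at h
    exact armTop_getD_ne _ _ _ h

lemma encoder_bottom_loc (T : Finset WangTile) (i : ℕ)
    (h : (encoderBar T).bottom.getD i 0 = 2) : i % (2 * mOf T + 1) = mOf T := by
  refine flatten_locator (by omega) (by omega) (T.toList.map (sectionBot T)) ?_ ?_ i h
  · intro l hl
    obtain ⟨t, _, rfl⟩ := List.mem_map.1 hl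
    exact sectionBot_length T t
  · intro l hl j hj
    obtain ⟨t, _, rfl⟩ := List.mem_map.1 hl
    exact sectionBot_loc T t j hj

lemma encoder_top_loc (T : Finset WangTile) (i : ℕ)
    (h : (encoderBar T).top.getD i 0 = 1) : i % (2 * mOf T + 1) = mOf T := by
  refine flatten_locator (by omega) (by omega) (T.toList.map (sectionTop T)) ?_ ?_ i h
  · intro l hl
    obtain ⟨t, _, rfl⟩ := List.mem_map.1 hl
    exact sectionTop_length T t
  · intro l hl j hj
    obtain ⟨t, _, rfl⟩ := List.mem_map.1 hl
    exact sectionTop_loc T t j hj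

lemma barsOf_cases (T : Finset WangTile) (b : WangBar) (hb : b ∈ barsOf T) :
    b = encoderBar T ∨ (2 ∉ b.bottom ∧ 1 ∉ b.top) := by
  simp only [barsOf, selectorBars, linkerBars, group1Fillers, group2Fillers,
    Finset.mem_union, Finset.mem_insert, Finset.mem_singleton] at hb
  by_cases he : b = encoderBar T
  · exact Or.inl he
  right
  casesm* _ ∨ _
  all_goals
    first
      | exact absurd ‹b = encoderBar T› he
      | (subst b; constructor <;>
          simp [topPointer, selUpper2, selUpper1, selectorLong, selLower1, selLower2,
            bottomPointer, alignerBar, linkA4B1, linkB2A3, longLinkA, longLinkB,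
            WangBar.bottom, WangBar.top, aCol, bCol, sCol, oCol, xCol, yCol,
            List.mem_replicate])

theorem encoders_next_to_selector (T : Finset WangTile) (hT : T.Nonempty)
    (f : ℤ × ℤ → WangBar × ℕ) (hf : IsBarTiling (barsOf T) f) (x y : ℤ) :
    ((f (x, y)).1 = topPointer →
      (f (x, y + 1)).1 = encoderBar T ∧
      (f (x, y + 1)).2 % (2 * mOf T + 1) = mOf T) ∧
    ((f (x, y)).1 = bottomPointer →
      (f (x, y - 1)).1 = encoderBar T ∧
      (f (x, y - 1)).2 % (2 * mOf T + 1) = mOf T) := by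
  obtain ⟨hmem, hidx, -, -, -, hv⟩ := hf
  constructor
  · intro h
    have h0 : (f (x, y)).2 = 0 := by
      have := hidx (x, y)
      rw [h] at this
      simpa [topPointer, WangBar.len, Nat.lt_one_iff] using this
    have hv1 := hv x y
    rw [h, h0] at hv1
    have hv2 : (f (x, y + 1)).1.bottom.getD (f (x, y + 1)).2 0 = 2 := by
      rw [← hv1]; rfl
    rcases barsOf_cases T _ (hmem (x, y + 1)) with he | ⟨h2, -⟩
    · refine ⟨he, encoder_bottom_loc T _ ?_⟩
      rw [← he]; exact hv2
    · exact absurd hv2 (getD_ne_of_not_mem (by norm_num) h2 _)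
  · intro h
    have h0 : (f (x, y)).2 = 0 := by
      have := hidx (x, y)
      rw [h] at this
      simpa [bottomPointer, WangBar.len, Nat.lt_one_iff] using this
    have hv1 := hv x (y - 1)
    rw [show y - 1 + 1 = y by ring, h, h0] at hv1
    have hv2 : (f (x, y - 1)).1.top.getD (f (x, y - 1)).2 0 = 1 := by
      rw [hv1]; rfl
    rcases barsOf_cases T _ (hmem (x, y - 1)) with he | ⟨-, h1⟩
    · refine ⟨he, encoder_top_loc T _ ?_⟩
      rw [← he]; exact hv2
    · exact absurd hv2 (getD_ne_of_not_mem (by norm_num) h1 _)
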